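/- Let K ≥ 8 be an integer. For t > 0 let W₁, W₂, W₃, W₄ be mutually independent Poisson random variables with mean 2t, and define B_K(t) = (1/2)·[1 − Σ_{n=−64}^{64} Σ_{k=−K}^{K} P(W₁ − W₂ = k)·P(W₃ − W₄ = n − 8k)]. Then, as t → 0⁺, B_K(t) = (8/567)·t⁹ + o(t⁹). -/

import Mathlib

open MeasureTheory ProbabilityTheory Filter Asymptotics
open scoped NNReal ENNReal Topology

namespace Stmt13
open Real
open scoped Nat

lemma expSum (r : ℝ≥0) : HasSum (fun j : ℕ => (r : ℝ) ^ j / j !) (Real.exp r) := by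
  have h := (poissonPMFRealSum r).mul_left (Real.exp r)
  simp only [poissonPMFReal, mul_one] at h
  have e : (fun j : ℕ => (r : ℝ) ^ j / j !)
      = fun j : ℕ => Real.exp r * (Real.exp (-(r:ℝ)) * (r:ℝ) ^ j / j !) := by
    funext j
    rw [Real.exp_neg, mul_div_assoc, ← mul_assoc, mul_inv_cancel₀ (Real.exp_ne_zero _), one_mul]
  rw [e]; exact h

lemma poissonMeasure_singleton (r : ℝ≥0) (n : ℕ) :
    poissonMeasure r {n} = ENNReal.ofReal (poissonPMFReal r n) := by
  rw [ProbabilityTheory.poissonMeasure_singleton]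
  rfl

lemma poisson_tail (r : ℝ≥0) (a : ℕ) :
    poissonMeasure r {n : ℕ | a ≤ n} ≤ ENNReal.ofReal ((r : ℝ) ^ a / a !) := by
  rw [poissonMeasure, Measure.sum_apply _ ((Set.to_countable _).measurableSet)]
  have hfun : (fun n : ℕ => (ENNReal.ofReal (Real.exp (-(r:ℝ)) * (r:ℝ) ^ n / n !)
      • Measure.dirac n) {n : ℕ | a ≤ n}) = {n : ℕ | a ≤ n}.indicator (poissonPMF r) := by
    funext n
    rw [Measure.smul_apply, Measure.dirac_apply' _ ((Set.to_countable _).measurableSet),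
      smul_eq_mul]
    by_cases h : a ≤ n
    · simp [h, ← poissonPMFReal_ofReal_eq_poissonPMF, poissonPMFReal]
    · simp [h]
  rw [hfun]
  have hinj : Function.Injective (fun j : ℕ => a + j) := fun x y h => by simpa using h
  have hsupp : Function.support ({n : ℕ | a ≤ n}.indicator (poissonPMF r))
      ⊆ Set.range (fun j : ℕ => a + j) := by
    intro n hn
    have : n ∈ {n : ℕ | a ≤ n} := by
      by_contra hc
      exact hn (Set.indicator_of_notMem hc _)
    have han : a ≤ n := this
    exact ⟨n - a, by show a + (n - a) = n; omega⟩
  rw [← hinj.tsum_eq hsupp]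
  have hterm : ∀ j : ℕ, ({n : ℕ | a ≤ n}.indicator (poissonPMF r)) (a + j)
      ≤ ENNReal.ofReal (Real.exp (-(r:ℝ)) * (r:ℝ) ^ a / a ! * ((r:ℝ) ^ j / j !)) := by
    intro j
    rw [Set.indicator_of_mem (by simp : a + j ∈ {n : ℕ | a ≤ n})]
    show ENNReal.ofReal (poissonPMFReal r (a + j)) ≤ _
    apply ENNReal.ofReal_le_ofReal
    rw [poissonPMFReal]
    have h1 : (a ! * j ! : ℝ) ≤ (a + j)! := by
      exact_mod_cast Nat.le_of_dvd (Nat.factorial_pos _) (Nat.factorial_mul_factorial_dvd_factorial_add a j)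
    have h2 : (0:ℝ) < (a+j)! := by positivity
    have h3 : (0:ℝ) < a ! := by positivity
    have h4 : (0:ℝ) < j ! := by positivity
    rw [pow_add, div_mul_div_comm, div_le_div_iff₀ h2 (by positivity)]
    have := mul_le_mul_of_nonneg_left h1
      (by positivity : (0:ℝ) ≤ Real.exp (-(r:ℝ)) * ((r:ℝ) ^ a * (r:ℝ) ^ j))
    nlinarith [this]
  calc ∑' j : ℕ, ({n : ℕ | a ≤ n}.indicator (poissonPMF r)) (a + j)
      ≤ ∑' j : ℕ, ENNReal.ofReal (Real.exp (-(r:ℝ)) * (r:ℝ) ^ a / a ! * ((r:ℝ) ^ j / j !)) :=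
        ENNReal.tsum_le_tsum hterm
    _ = ENNReal.ofReal ((r:ℝ) ^ a / a !) := by
        rw [← ENNReal.ofReal_tsum_of_nonneg (fun j => by positivity)
          (((expSum r).summable).mul_left _)]
        congr 1
        rw [((expSum r).summable.tsum_mul_left _ : _), (expSum r).tsum_eq]
        rw [Real.exp_neg]
        field_simp

noncomputable def skk (t : ℝ) (k : ℤ) : ℝ :=
  (((poissonMeasure (2 * t).toNNReal).prod (poissonMeasure (2 * t).toNNReal))
    {p : ℕ × ℕ | (p.1 : ℤ) - (p.2 : ℤ) = k}).toReal

variable {t : ℝ}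

lemma skk_nonneg (k : ℤ) : 0 ≤ skk t k := ENNReal.toReal_nonneg

lemma skk_meas_ne_top (k : ℤ) :
    ((poissonMeasure (2 * t).toNNReal).prod (poissonMeasure (2 * t).toNNReal))
      {p : ℕ × ℕ | (p.1 : ℤ) - (p.2 : ℤ) = k} ≠ ⊤ :=
  measure_ne_top _ _

lemma coe_r (ht : 0 ≤ t) : ((2 * t).toNNReal : ℝ) = 2 * t :=
  Real.coe_toNNReal _ (by linarith)

lemma skk_le (ht : 0 ≤ t) (k : ℤ) : skk t k ≤ (2 * t) ^ k.natAbs / (k.natAbs)! := by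
  set r := (2 * t).toNNReal with hr
  set a := k.natAbs with ha
  have key : ((poissonMeasure r).prod (poissonMeasure r))
      {p : ℕ × ℕ | (p.1 : ℤ) - (p.2 : ℤ) = k} ≤ ENNReal.ofReal ((2 * t) ^ a / a !) := by
    rcases le_or_gt 0 k with hk | hk
    · have hsub : {p : ℕ × ℕ | (p.1 : ℤ) - (p.2 : ℤ) = k}
          ⊆ ({n : ℕ | a ≤ n} ×ˢ Set.univ) := by
        rintro ⟨m, n⟩ hp
        simp only [Set.mem_setOf_eq] at hp
        constructor
        · show a ≤ m; omega
        · trivial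
      calc _ ≤ ((poissonMeasure r).prod (poissonMeasure r)) ({n : ℕ | a ≤ n} ×ˢ Set.univ) :=
              measure_mono hsub
        _ = poissonMeasure r {n : ℕ | a ≤ n} := by
              rw [Measure.prod_prod, measure_univ, mul_one]
        _ ≤ ENNReal.ofReal ((2 * t) ^ a / a !) := by
              have := poisson_tail r a
              rwa [coe_r ht] at this
    · have hsub : {p : ℕ × ℕ | (p.1 : ℤ) - (p.2 : ℤ) = k}
          ⊆ (Set.univ ×ˢ {n : ℕ | a ≤ n}) := by
        rintro ⟨m, n⟩ hp
        simp only [Set.mem_setOf_eq] at hp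
        refine ⟨trivial, ?_⟩
        show a ≤ n; omega
      calc _ ≤ ((poissonMeasure r).prod (poissonMeasure r)) (Set.univ ×ˢ {n : ℕ | a ≤ n}) :=
              measure_mono hsub
        _ = poissonMeasure r {n : ℕ | a ≤ n} := by
              rw [Measure.prod_prod, measure_univ, one_mul]
        _ ≤ ENNReal.ofReal ((2 * t) ^ a / a !) := by
              have := poisson_tail r a
              rwa [coe_r ht] at this
  exact ENNReal.toReal_le_of_le_ofReal (by positivity) key

lemma skk_ge (ht : 0 ≤ t) (k : ℤ) :
    Real.exp (-(4 * t)) * (2 * t) ^ k.natAbs / (k.natAbs)! ≤ skk t k := by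
  set r := (2 * t).toNNReal with hr
  set a := k.natAbs with ha
  have hval : ENNReal.ofReal (Real.exp (-(4 * t)) * (2 * t) ^ a / a !)
      ≤ ((poissonMeasure r).prod (poissonMeasure r))
        {p : ℕ × ℕ | (p.1 : ℤ) - (p.2 : ℤ) = k} := by
    have hpois : ∀ n : ℕ, poissonMeasure r {n} = ENNReal.ofReal (Real.exp (-(2*t)) * (2*t) ^ n / n !) := by
      intro n
      rw [poissonMeasure_singleton, poissonPMFReal, coe_r ht]
    rcases le_or_gt 0 k with hk | hk
    · have hmem : ({a} ×ˢ {0} : Set (ℕ × ℕ)) ⊆ {p : ℕ × ℕ | (p.1 : ℤ) - (p.2 : ℤ) = k} := by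
        rintro ⟨m, n⟩ ⟨h1, h2⟩
        simp only [Set.mem_singleton_iff] at h1 h2
        subst h1; subst h2
        show ((a : ℤ) - 0 = k); omega
      refine le_trans (le_of_eq ?_) (measure_mono hmem)
      rw [Measure.prod_prod, hpois, hpois, ← ENNReal.ofReal_mul (by positivity)]
      congr 1
      rw [pow_zero, Nat.factorial_zero]
      rw [show Real.exp (-(4*t)) = Real.exp (-(2*t)) * Real.exp (-(2*t)) by
        rw [← Real.exp_add]; ring_nf]
      field_simp
      ring
    · have hmem : ({0} ×ˢ {a} : Set (ℕ × ℕ)) ⊆ {p : ℕ × ℕ | (p.1 : ℤ) - (p.2 : ℤ) = k} := by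
        rintro ⟨m, n⟩ ⟨h1, h2⟩
        simp only [Set.mem_singleton_iff] at h1 h2
        subst h1; subst h2
        show ((0 : ℤ) - (a : ℤ) = k); omega
      refine le_trans (le_of_eq ?_) (measure_mono hmem)
      rw [Measure.prod_prod, hpois, hpois, ← ENNReal.ofReal_mul (by positivity)]
      congr 1
      rw [pow_zero, Nat.factorial_zero]
      rw [show Real.exp (-(4*t)) = Real.exp (-(2*t)) * Real.exp (-(2*t)) by
        rw [← Real.exp_add]; ring_nf]
      field_simp
      ring
  have := ENNReal.toReal_mono (skk_meas_ne_top k) hval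
  rwa [ENNReal.toReal_ofReal (by positivity)] at this

lemma skk_summable_hasSum : Summable (skk t) ∧ ∑' k : ℤ, skk t k = 1 := by
  set r := (2 * t).toNNReal with hr
  set μ := (poissonMeasure r).prod (poissonMeasure r) with hμ
  have hmeas : ∀ k : ℤ, MeasurableSet {p : ℕ × ℕ | (p.1 : ℤ) - (p.2 : ℤ) = k} :=
    fun k => (Set.to_countable _).measurableSet
  have hdisj : Pairwise (Function.onFun Disjoint
      (fun k : ℤ => {p : ℕ × ℕ | (p.1 : ℤ) - (p.2 : ℤ) = k})) := by
    intro k l hkl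
    refine Set.disjoint_left.2 ?_
    rintro ⟨m, n⟩ h1 h2
    simp only [Set.mem_setOf_eq] at h1 h2
    exact hkl (h1.symm.trans h2) |>.elim
  have hunion : (⋃ k : ℤ, {p : ℕ × ℕ | (p.1 : ℤ) - (p.2 : ℤ) = k}) = Set.univ := by
    ext ⟨m, n⟩
    simp only [Set.mem_iUnion, Set.mem_setOf_eq, Set.mem_univ, iff_true]
    exact ⟨(m : ℤ) - n, rfl⟩
  have htsum : ∑' k : ℤ, μ {p : ℕ × ℕ | (p.1 : ℤ) - (p.2 : ℤ) = k} = 1 := by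
    rw [← measure_iUnion hdisj hmeas, hunion, measure_univ]
  constructor
  · exact ENNReal.summable_toReal (by rw [htsum]; exact ENNReal.one_ne_top)
  · rw [show skk t = fun k => (μ {p : ℕ × ℕ | (p.1 : ℤ) - (p.2 : ℤ) = k}).toReal from rfl,
      ← ENNReal.tsum_toReal_eq (fun k => measure_ne_top _ _), htsum, ENNReal.toReal_one]


lemma g_hasSum : HasSum (fun j : ℤ => 1 / ((j.natAbs)! : ℝ)) (2 * Real.exp 1 - 1) := by
  have h0 : HasSum (fun n : ℕ => 1 / (n ! : ℝ)) (Real.exp 1) := by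
    have := expSum 1
    simpa [one_div] using this
  have h1 : HasSum (fun n : ℕ => 1 / ((n + 1)! : ℝ)) (Real.exp 1 - 1) := by
    refine (hasSum_nat_add_iff (f := fun n : ℕ => 1 / ((n)! : ℝ)) 1).2 ?_
    simpa using h0
  have h2 := h0.int_rec h1
  have heq : (fun j : ℤ => 1 / ((j.natAbs)! : ℝ))
      = fun j : ℤ => Int.rec (fun n : ℕ => 1 / ((n)! : ℝ)) (fun n : ℕ => 1 / ((n + 1)! : ℝ)) j := by
    funext j
    cases j <;> rfl
  rw [heq, show 2 * Real.exp 1 - 1 = Real.exp 1 + (Real.exp 1 - 1) by ring]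
  exact h2

lemma g_summable : Summable (fun j : ℤ => 1 / ((j.natAbs)! : ℝ)) := g_hasSum.summable

lemma g_tsum_le : ∑' j : ℤ, (1 / ((j.natAbs)! : ℝ)) ≤ 2 * Real.exp 1 := by
  rw [g_hasSum.tsum_eq]
  linarith

variable {t : ℝ}

lemma sum_skk_le_one (s : Finset ℤ) : ∑ j ∈ s, skk t j ≤ 1 := by
  obtain ⟨hsum, htot⟩ := skk_summable_hasSum (t := t)
  calc ∑ j ∈ s, skk t j ≤ ∑' j : ℤ, skk t j := Summable.sum_le_tsum s (fun j _ => skk_nonneg j) hsum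
    _ = 1 := htot

lemma skk_le' (ht : 0 ≤ t) (hx : 2 * t ≤ 1) {m : ℕ} {k : ℤ} (hm : m ≤ k.natAbs) :
    skk t k ≤ (2 * t) ^ m * (1 / ((k.natAbs)! : ℝ)) := by
  refine (skk_le ht k).trans ?_
  rw [div_eq_mul_one_div]
  apply mul_le_mul_of_nonneg_right _ (by positivity)
  exact pow_le_pow_of_le_one (by linarith) hx hm

lemma tail_bound (ht : 0 ≤ t) (hx : 2 * t ≤ 1) (m : ℕ) (s : Finset ℤ)
    (hs : ∀ j : ℤ, j.natAbs < m → j ∈ s) :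
    1 - ∑ j ∈ s, skk t j ≤ 2 * Real.exp 1 * (2 * t) ^ m := by
  obtain ⟨hsum, htot⟩ := skk_summable_hasSum (t := t)
  have hsplit := Summable.sum_add_tsum_subtype_compl hsum s
  rw [htot] at hsplit
  have heq : 1 - ∑ j ∈ s, skk t j = ∑' j : {x : ℤ // x ∉ s}, skk t (j : ℤ) := by
    linarith
  rw [heq]
  have hterm : ∀ j : {x : ℤ // x ∉ s},
      skk t (j : ℤ) ≤ (2 * t) ^ m * (1 / (((j : ℤ).natAbs)! : ℝ)) := by
    rintro ⟨j, hj⟩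
    have : m ≤ j.natAbs := by
      by_contra hc
      exact hj (hs j (by omega))
    exact skk_le' ht hx this
  have hsub : {x : ℤ // x ∉ s} = ({x : ℤ | x ∉ s} : Set ℤ) := rfl
  calc ∑' j : {x : ℤ // x ∉ s}, skk t (j : ℤ)
      ≤ ∑' j : {x : ℤ // x ∉ s}, (2 * t) ^ m * (1 / (((j : ℤ).natAbs)! : ℝ)) :=
        Summable.tsum_le_tsum hterm (hsum.subtype _) ((g_summable.mul_left _).subtype _)
    _ ≤ ∑' j : ℤ, (2 * t) ^ m * (1 / ((j.natAbs)! : ℝ)) := by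
        rw [show (∑' j : {x : ℤ // x ∉ s}, (2 * t) ^ m * (1 / (((j : ℤ).natAbs)! : ℝ)))
            = ∑' j : ({x : ℤ | x ∉ s} : Set ℤ), (2 * t) ^ m * (1 / (((j : ℤ).natAbs)! : ℝ)) from rfl,
          tsum_subtype {x : ℤ | x ∉ s} (fun j : ℤ => (2 * t) ^ m * (1 / ((j.natAbs)! : ℝ)))]
        refine Summable.tsum_le_tsum (fun j => Set.indicator_le_self' (fun j _ => by positivity) j)
          ((g_summable.mul_left _).indicator _) (g_summable.mul_left _)
    _ = (2 * t) ^ m * ∑' j : ℤ, (1 / ((j.natAbs)! : ℝ)) := by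
        rw [tsum_mul_left]
    _ ≤ 2 * Real.exp 1 * (2 * t) ^ m := by
        have hp : (0:ℝ) ≤ (2*t)^m := by positivity
        have h := mul_le_mul_of_nonneg_left g_tsum_le hp
        linarith

lemma sum_high_le (ht : 0 ≤ t) (hx : 2 * t ≤ 1) (m : ℕ) (s : Finset ℤ)
    (hs : ∀ j ∈ s, m ≤ j.natAbs) :
    ∑ j ∈ s, skk t j ≤ 2 * Real.exp 1 * (2 * t) ^ m := by
  calc ∑ j ∈ s, skk t j ≤ ∑ j ∈ s, (2 * t) ^ m * (1 / ((j.natAbs)! : ℝ)) :=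
        Finset.sum_le_sum (fun j hj => skk_le' ht hx (hs j hj))
    _ ≤ ∑' j : ℤ, (2 * t) ^ m * (1 / ((j.natAbs)! : ℝ)) :=
        Summable.sum_le_tsum s (fun j _ => by positivity) (g_summable.mul_left _)
    _ = (2 * t) ^ m * ∑' j : ℤ, (1 / ((j.natAbs)! : ℝ)) := tsum_mul_left
    _ ≤ 2 * Real.exp 1 * (2 * t) ^ m := by
        have := g_tsum_le
        have hp : (0:ℝ) ≤ (2*t)^m := by positivity
        nlinarith


-- concrete skk bounds at specific points
lemma skk_le_pow (ht : 0 ≤ t) (k : ℤ) : skk t k ≤ (2 * t) ^ k.natAbs := by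
  refine (skk_le ht k).trans ?_
  apply div_le_self (by positivity)
  exact_mod_cast Nat.one_le_iff_ne_zero.2 (Nat.factorial_ne_zero _)

set_option maxHeartbeats 2000000 in
lemma key (K : ℕ) (hK : 8 ≤ K) (ht : 0 < t) (hx : 2 * t ≤ 1) :
    |(1 - ∑ n ∈ Finset.Icc (-64:ℤ) 64, ∑ k ∈ Finset.Icc (-(K:ℤ)) (K:ℤ),
        skk t k * skk t (n - 8 * k)) - (16 / 567) * t ^ 9| ≤ 200000 * t ^ 10 := by
  have ht' : 0 ≤ t := ht.le
  have hx0 : (0:ℝ) ≤ 2 * t := by linarith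
  have hpow : ∀ {m n : ℕ}, m ≤ n → (2*t)^n ≤ (2*t)^m :=
    fun h => pow_le_pow_of_le_one hx0 hx h
  have hE : 2 * Real.exp 1 ≤ 6 := by have := Real.exp_one_lt_d9; norm_num at this ⊢; linarith
  set q : ℤ → ℝ := skk t with hq_def
  set sfun : ℤ → ℝ := fun k => ∑ j ∈ Finset.Icc (-64 - 8*k) (64 - 8*k), q j with hs_def
  set IK : Finset ℤ := Finset.Icc (-(K:ℤ)) (K:ℤ) with hIK_def
  -- Step A : rearrange the double sum
  have hS : ∑ n ∈ Finset.Icc (-64:ℤ) 64, ∑ k ∈ IK, q k * q (n - 8*k)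
      = ∑ k ∈ IK, q k * sfun k := by
    rw [Finset.sum_comm]
    refine Finset.sum_congr rfl (fun k hk => ?_)
    rw [← Finset.mul_sum]
    congr 1
    refine Finset.sum_nbij' (fun n => n - 8*k) (fun m => m + 8*k) ?_ ?_ ?_ ?_ ?_
    · intro a ha; simp only [Finset.mem_Icc] at ha ⊢; omega
    · intro a ha; simp only [Finset.mem_Icc] at ha ⊢; omega
    · intro a _; ring
    · intro a _; ring
    · intro a _; rfl
  -- Step B : decomposition
  have hdecomp : ∑ k ∈ IK, q k * (1 - sfun k) = ∑ k ∈ IK, q k - ∑ k ∈ IK, q k * sfun k := by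
    rw [← Finset.sum_sub_distrib]
    exact Finset.sum_congr rfl fun k _ => by ring
  -- basic facts
  have hq0 : ∀ k, 0 ≤ q k := fun k => skk_nonneg k
  have hs0 : ∀ k, 0 ≤ sfun k := fun k => Finset.sum_nonneg fun j _ => hq0 j
  have hs1 : ∀ k, sfun k ≤ 1 := fun k => sum_skk_le_one _
  have hf0 : ∀ k, 0 ≤ q k * (1 - sfun k) := fun k => mul_nonneg (hq0 k) (by linarith [hs1 k])
  have hfq : ∀ k, q k * (1 - sfun k) ≤ q k :=
    fun k => mul_le_of_le_one_right (hq0 k) (by linarith [hs0 k])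
  -- evaluated index sets
  have hsfun8 : sfun 8 = ∑ j ∈ Finset.Icc (-128:ℤ) 0, q j := by
    rw [hs_def]; norm_num
  have hsfunm8 : sfun (-8) = ∑ j ∈ Finset.Icc (0:ℤ) 128, q j := by
    rw [hs_def]; norm_num
  have hsfun9 : sfun 9 = ∑ j ∈ Finset.Icc (-136:ℤ) (-8), q j := by
    rw [hs_def]; norm_num
  have hsfunm9 : sfun (-9) = ∑ j ∈ Finset.Icc (8:ℤ) 136, q j := by
    rw [hs_def]; norm_num
  -- insert identities
  have I1 : ∑ j ∈ Finset.Icc (-128:ℤ) 1, q j = ∑ j ∈ Finset.Icc (-128:ℤ) 0, q j + q 1 := by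
    have h : Finset.Icc (-128:ℤ) 1 = insert 1 (Finset.Icc (-128) 0) := by
      ext j; simp only [Finset.mem_Icc, Finset.mem_insert]; omega
    rw [h, Finset.sum_insert (by simp)]; ring
  have I2 : ∑ j ∈ Finset.Icc (-1:ℤ) 128, q j = ∑ j ∈ Finset.Icc (0:ℤ) 128, q j + q (-1) := by
    have h : Finset.Icc (-1:ℤ) 128 = insert (-1) (Finset.Icc (0:ℤ) 128) := by
      ext j; simp only [Finset.mem_Icc, Finset.mem_insert]; omega
    rw [h, Finset.sum_insert (by simp)]; ring
  have hsplit9 : ∀ f : ℤ → ℝ, ∑ j ∈ Finset.Icc (-9:ℤ) 9, f j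
      = ∑ j ∈ Finset.Icc (-8:ℤ) 8, f j + (f (-9) + f 9) := by
    intro f
    have h : Finset.Icc (-9:ℤ) 9 = insert (-9) (insert 9 (Finset.Icc (-8:ℤ) 8)) := by
      ext j; simp only [Finset.mem_Icc, Finset.mem_insert]; omega
    rw [h, Finset.sum_insert (by simp), Finset.sum_insert (by simp)]; ring
  have hsplit8 : ∀ f : ℤ → ℝ, ∑ j ∈ Finset.Icc (-8:ℤ) 8, f j
      = ∑ j ∈ Finset.Icc (-7:ℤ) 7, f j + (f (-8) + f 8) := by
    intro f
    have h : Finset.Icc (-8:ℤ) 8 = insert (-8) (insert 8 (Finset.Icc (-7:ℤ) 7)) := by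
      ext j; simp only [Finset.mem_Icc, Finset.mem_insert]; omega
    rw [h, Finset.sum_insert (by simp), Finset.sum_insert (by simp)]; ring
  -- k = 8 bounds
  have h8low : q 1 ≤ 1 - sfun 8 := by
    have h := sum_skk_le_one (t := t) (Finset.Icc (-128:ℤ) 1)
    rw [I1, ← hsfun8] at h; linarith
  have h8up : 1 - sfun 8 ≤ q 1 + 2 * Real.exp 1 * (2*t)^2 := by
    have h := tail_bound ht' hx 2 (Finset.Icc (-128:ℤ) 1)
      (fun j hj => by simp only [Finset.mem_Icc]; omega)
    rw [I1, ← hsfun8] at h; linarith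
  have hm8low : q (-1) ≤ 1 - sfun (-8) := by
    have h := sum_skk_le_one (t := t) (Finset.Icc (-1:ℤ) 128)
    rw [I2, ← hsfunm8] at h; linarith
  have hm8up : 1 - sfun (-8) ≤ q (-1) + 2 * Real.exp 1 * (2*t)^2 := by
    have h := tail_bound ht' hx 2 (Finset.Icc (-1:ℤ) 128)
      (fun j hj => by simp only [Finset.mem_Icc]; omega)
    rw [I2, ← hsfunm8] at h; linarith
  -- specific q upper bounds
  have hq8 : q 8 ≤ (2*t)^8 := by have := skk_le_pow ht' 8; norm_num at this; exact this
  have hqm8 : q (-8) ≤ (2*t)^8 := by have := skk_le_pow ht' (-8); norm_num at this; exact this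
  have hq9' : q 9 ≤ (2*t)^9 := by have := skk_le_pow ht' 9; norm_num at this; exact this
  have hqm9' : q (-9) ≤ (2*t)^9 := by have := skk_le_pow ht' (-9); norm_num at this; exact this
  -- terms at ±8
  have hterm8_up : q 8 * (1 - sfun 8) ≤ q 8 * q 1 + 6 * (2*t)^10 := by
    have h1 : q 8 * (1 - sfun 8) ≤ q 8 * (q 1 + 2 * Real.exp 1 * (2*t)^2) :=
      mul_le_mul_of_nonneg_left h8up (hq0 8)
    have h2 : q 8 * (2 * Real.exp 1 * (2*t)^2) ≤ (2*t)^8 * (2 * Real.exp 1 * (2*t)^2) :=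
      mul_le_mul_of_nonneg_right hq8 (by positivity)
    have h3 : (2*t)^8 * (2 * Real.exp 1 * (2*t)^2) = (2 * Real.exp 1) * (2*t)^10 := by
      rw [show (10:ℕ) = 8 + 2 by norm_num, pow_add]; ring
    have h4 : (2 * Real.exp 1) * (2*t)^10 ≤ 6 * (2*t)^10 :=
      mul_le_mul_of_nonneg_right hE (by positivity)
    have h5 : q 8 * (q 1 + 2 * Real.exp 1 * (2*t)^2)
        = q 8 * q 1 + q 8 * (2 * Real.exp 1 * (2*t)^2) := by ring
    linarith
  have hterm8_low : q 8 * q 1 ≤ q 8 * (1 - sfun 8) := mul_le_mul_of_nonneg_left h8low (hq0 8)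
  have htermm8_up : q (-8) * (1 - sfun (-8)) ≤ q (-8) * q (-1) + 6 * (2*t)^10 := by
    have h1 : q (-8) * (1 - sfun (-8)) ≤ q (-8) * (q (-1) + 2 * Real.exp 1 * (2*t)^2) :=
      mul_le_mul_of_nonneg_left hm8up (hq0 (-8))
    have h2 : q (-8) * (2 * Real.exp 1 * (2*t)^2) ≤ (2*t)^8 * (2 * Real.exp 1 * (2*t)^2) :=
      mul_le_mul_of_nonneg_right hqm8 (by positivity)
    have h3 : (2*t)^8 * (2 * Real.exp 1 * (2*t)^2) = (2 * Real.exp 1) * (2*t)^10 := by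
      rw [show (10:ℕ) = 8 + 2 by norm_num, pow_add]; ring
    have h4 : (2 * Real.exp 1) * (2*t)^10 ≤ 6 * (2*t)^10 :=
      mul_le_mul_of_nonneg_right hE (by positivity)
    have h5 : q (-8) * (q (-1) + 2 * Real.exp 1 * (2*t)^2)
        = q (-8) * q (-1) + q (-8) * (2 * Real.exp 1 * (2*t)^2) := by ring
    linarith
  have htermm8_low : q (-8) * q (-1) ≤ q (-8) * (1 - sfun (-8)) :=
    mul_le_mul_of_nonneg_left hm8low (hq0 (-8))
  -- small |k| ≤ 7 terms
  have hsmall : ∀ k ∈ Finset.Icc (-7:ℤ) 7, q k * (1 - sfun k) ≤ 6 * (2*t)^10 := by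
    intro k hk
    simp only [Finset.mem_Icc] at hk
    have hna : k.natAbs ≤ 7 := by omega
    have htail : 1 - sfun k ≤ 2 * Real.exp 1 * (2*t)^(65 - 8*k.natAbs) := by
      rw [hs_def]
      refine tail_bound ht' hx _ _ ?_
      intro j hj
      simp only [Finset.mem_Icc]; omega
    have hqk : q k ≤ (2*t)^(k.natAbs) := skk_le_pow ht' k
    have h1 : q k * (1 - sfun k)
        ≤ (2*t)^(k.natAbs) * (2 * Real.exp 1 * (2*t)^(65 - 8*k.natAbs)) :=
      mul_le_mul hqk htail (by linarith [hs1 k]) (by positivity)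
    have h2 : (2*t)^(k.natAbs) * (2 * Real.exp 1 * (2*t)^(65 - 8*k.natAbs))
        = (2*Real.exp 1) * (2*t)^(k.natAbs + (65 - 8*k.natAbs)) := by
      rw [pow_add]; ring
    have h3 : (2*t)^(k.natAbs + (65 - 8*k.natAbs)) ≤ (2*t)^10 := hpow (by omega)
    have h4 : (2*Real.exp 1) * (2*t)^(k.natAbs + (65 - 8*k.natAbs)) ≤ 6 * (2*t)^10 := by
      have e1 : (2*Real.exp 1) * (2*t)^(k.natAbs + (65 - 8*k.natAbs))
          ≤ (2*Real.exp 1) * (2*t)^10 := by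
        apply mul_le_mul_of_nonneg_left h3 (by positivity)
      have e2 : (2*Real.exp 1) * (2*t)^10 ≤ 6 * (2*t)^10 :=
        mul_le_mul_of_nonneg_right hE (by positivity)
      linarith
    linarith
  have hsmall_sum : ∑ k ∈ Finset.Icc (-7:ℤ) 7, q k * (1 - sfun k) ≤ 90 * (2*t)^10 := by
    have h := Finset.sum_le_card_nsmul (Finset.Icc (-7:ℤ) 7)
      (fun k => q k * (1 - sfun k)) (6 * (2*t)^10) hsmall
    have hcard : (Finset.Icc (-7:ℤ) 7).card = 15 := by rw [Int.card_Icc]; rfl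
    rw [hcard] at h
    have : (15:ℕ) • (6 * (2*t)^10) = 90 * (2*t)^10 := by
      rw [nsmul_eq_mul]; push_cast; ring
    linarith [h.trans_eq this]
  have hsmall_sum0 : 0 ≤ ∑ k ∈ Finset.Icc (-7:ℤ) 7, q k * (1 - sfun k) :=
    Finset.sum_nonneg fun k _ => hf0 k
  -- main term
  set main : ℝ := q 8 * q 1 + q (-8) * q (-1) + q 9 + q (-9) with hmain_def
  -- case analysis on K
  have hcase : K = 8 ∨ 9 ≤ K := by omega
  have hkey2 : |(1 - ∑ k ∈ IK, q k * sfun k) - main| ≤ 120000 * t^10 := by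
    have hx10 : (2*t)^10 = 1024 * t^10 := by ring
    have hT0 : 0 ≤ 1 - ∑ k ∈ IK, q k := by linarith [sum_skk_le_one (t := t) IK]
    have hone : 1 - ∑ k ∈ IK, q k * sfun k
        = (1 - ∑ k ∈ IK, q k) + ∑ k ∈ IK, q k * (1 - sfun k) := by
      rw [hdecomp]; ring
    rcases hcase with hK8 | hK9
    · -- K = 8
      have hIK : IK = Finset.Icc (-8:ℤ) 8 := by rw [hIK_def, hK8]; norm_num
      have hsum2 : ∑ k ∈ IK, q k * (1 - sfun k)
          = ∑ k ∈ Finset.Icc (-7:ℤ) 7, q k * (1 - sfun k)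
            + (q (-8) * (1 - sfun (-8)) + q 8 * (1 - sfun 8)) := by
        rw [hIK, hsplit8 (fun k => q k * (1 - sfun k))]
      have hsumq9 := hsplit9 q
      have hT_low : q (-9) + q 9 ≤ 1 - ∑ k ∈ IK, q k := by
        have h := sum_skk_le_one (t := t) (Finset.Icc (-9:ℤ) 9)
        rw [hsumq9] at h
        rw [hIK]; linarith
      have hT_up : 1 - ∑ k ∈ IK, q k ≤ q (-9) + q 9 + 6 * (2*t)^10 := by
        have h := tail_bound ht' hx 10 (Finset.Icc (-9:ℤ) 9)
          (fun j hj => by simp only [Finset.mem_Icc]; omega)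
        rw [hsumq9] at h
        have e2 : (2*Real.exp 1) * (2*t)^10 ≤ 6 * (2*t)^10 :=
          mul_le_mul_of_nonneg_right hE (by positivity)
        rw [hIK]; linarith
      rw [hone, hsum2]
      rw [abs_le]
      have hp10 : (0:ℝ) ≤ (2*t)^10 := pow_nonneg hx0 10
      constructor
      · linarith
      · linarith
    · -- 9 ≤ K
      have hsub9 : Finset.Icc (-9:ℤ) 9 ⊆ IK := by
        intro j hj
        simp only [hIK_def, Finset.mem_Icc] at hj ⊢
        omega
      have hsd : ∀ f : ℤ → ℝ, ∑ k ∈ IK \ Finset.Icc (-9:ℤ) 9, f k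
          + ∑ k ∈ Finset.Icc (-9:ℤ) 9, f k = ∑ k ∈ IK, f k :=
        fun f => Finset.sum_sdiff hsub9
      -- outer piece
      have houter_up : ∑ k ∈ IK \ Finset.Icc (-9:ℤ) 9, q k * (1 - sfun k) ≤ 6 * (2*t)^10 := by
        have h1 : ∑ k ∈ IK \ Finset.Icc (-9:ℤ) 9, q k * (1 - sfun k)
            ≤ ∑ k ∈ IK \ Finset.Icc (-9:ℤ) 9, q k :=
          Finset.sum_le_sum fun k _ => hfq k
        have h2 : ∑ k ∈ IK \ Finset.Icc (-9:ℤ) 9, q k ≤ 2 * Real.exp 1 * (2*t)^10 := by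
          refine sum_high_le ht' hx 10 _ ?_
          intro j hj
          simp only [Finset.mem_sdiff, hIK_def, Finset.mem_Icc] at hj
          omega
        have e2 : (2*Real.exp 1) * (2*t)^10 ≤ 6 * (2*t)^10 :=
          mul_le_mul_of_nonneg_right hE (by positivity)
        linarith
      have houter_low : 0 ≤ ∑ k ∈ IK \ Finset.Icc (-9:ℤ) 9, q k * (1 - sfun k) :=
        Finset.sum_nonneg fun k _ => hf0 k
      -- T piece
      have hT_up : 1 - ∑ k ∈ IK, q k ≤ 6 * (2*t)^10 := by
        have hmono : ∑ k ∈ Finset.Icc (-9:ℤ) 9, q k ≤ ∑ k ∈ IK, q k :=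
          Finset.sum_le_sum_of_subset_of_nonneg hsub9 (fun k _ _ => hq0 k)
        have h := tail_bound ht' hx 10 (Finset.Icc (-9:ℤ) 9)
          (fun j hj => by simp only [Finset.mem_Icc]; omega)
        have e2 : (2*Real.exp 1) * (2*t)^10 ≤ 6 * (2*t)^10 :=
          mul_le_mul_of_nonneg_right hE (by positivity)
        linarith
      -- k = ±9 terms
      have hs9up : sfun 9 ≤ 2 * Real.exp 1 * (2*t)^8 := by
        rw [hsfun9]
        refine sum_high_le ht' hx 8 _ ?_
        intro j hj
        simp only [Finset.mem_Icc] at hj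
        omega
      have hsm9up : sfun (-9) ≤ 2 * Real.exp 1 * (2*t)^8 := by
        rw [hsfunm9]
        refine sum_high_le ht' hx 8 _ ?_
        intro j hj
        simp only [Finset.mem_Icc] at hj
        omega
      have hterm9_up : q 9 * (1 - sfun 9) ≤ q 9 := hfq 9
      have htermm9_up : q (-9) * (1 - sfun (-9)) ≤ q (-9) := hfq (-9)
      have hterm9_low : q 9 - 6 * (2*t)^10 ≤ q 9 * (1 - sfun 9) := by
        have h1 : q 9 * sfun 9 ≤ (2*t)^9 * (2 * Real.exp 1 * (2*t)^8) :=
          mul_le_mul hq9' hs9up (hs0 9) (by positivity)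
        have h2 : (2*t)^9 * (2 * Real.exp 1 * (2*t)^8) = (2*Real.exp 1) * (2*t)^17 := by
          rw [show (17:ℕ) = 9 + 8 by norm_num, pow_add]; ring
        have h3 : (2*Real.exp 1) * (2*t)^17 ≤ 6 * (2*t)^10 := by
          have e1 : (2*Real.exp 1) * (2*t)^17 ≤ (2*Real.exp 1) * (2*t)^10 :=
            mul_le_mul_of_nonneg_left (hpow (by norm_num)) (by positivity)
          have e2 : (2*Real.exp 1) * (2*t)^10 ≤ 6 * (2*t)^10 :=
            mul_le_mul_of_nonneg_right hE (by positivity)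
          linarith
        have h4 : q 9 * (1 - sfun 9) = q 9 - q 9 * sfun 9 := by ring
        linarith
      have htermm9_low : q (-9) - 6 * (2*t)^10 ≤ q (-9) * (1 - sfun (-9)) := by
        have h1 : q (-9) * sfun (-9) ≤ (2*t)^9 * (2 * Real.exp 1 * (2*t)^8) :=
          mul_le_mul hqm9' hsm9up (hs0 (-9)) (by positivity)
        have h2 : (2*t)^9 * (2 * Real.exp 1 * (2*t)^8) = (2*Real.exp 1) * (2*t)^17 := by
          rw [show (17:ℕ) = 9 + 8 by norm_num, pow_add]; ring
        have h3 : (2*Real.exp 1) * (2*t)^17 ≤ 6 * (2*t)^10 := by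
          have e1 : (2*Real.exp 1) * (2*t)^17 ≤ (2*Real.exp 1) * (2*t)^10 :=
            mul_le_mul_of_nonneg_left (hpow (by norm_num)) (by positivity)
          have e2 : (2*Real.exp 1) * (2*t)^10 ≤ 6 * (2*t)^10 :=
            mul_le_mul_of_nonneg_right hE (by positivity)
          linarith
        have h4 : q (-9) * (1 - sfun (-9)) = q (-9) - q (-9) * sfun (-9) := by ring
        linarith
      -- assemble
      have hsum2 : ∑ k ∈ IK, q k * (1 - sfun k)
          = ∑ k ∈ IK \ Finset.Icc (-9:ℤ) 9, q k * (1 - sfun k)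
            + (∑ k ∈ Finset.Icc (-7:ℤ) 7, q k * (1 - sfun k)
              + (q (-8) * (1 - sfun (-8)) + q 8 * (1 - sfun 8))
              + (q (-9) * (1 - sfun (-9)) + q 9 * (1 - sfun 9))) := by
        rw [← hsd (fun k => q k * (1 - sfun k)),
          hsplit9 (fun k => q k * (1 - sfun k)), hsplit8 (fun k => q k * (1 - sfun k))]
      rw [hone, hsum2]
      rw [abs_le]
      have hp10 : (0:ℝ) ≤ (2*t)^10 := pow_nonneg hx0 10
      constructor
      · linarith
      · linarith
  -- main term estimates
  have hfact8 : ((Nat.factorial 8 : ℕ) : ℝ) = 40320 := by norm_num [Nat.factorial]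
  have hfact9 : ((Nat.factorial 9 : ℕ) : ℝ) = 362880 := by norm_num [Nat.factorial]
  have hq8u : q 8 ≤ (2*t)^8 / 40320 := by
    have := skk_le (t := t) ht' 8
    norm_num [Nat.factorial] at this
    exact this
  have hq1u : q 1 ≤ 2*t := by
    have := skk_le (t := t) ht' 1
    norm_num [Nat.factorial] at this
    exact this
  have hqm8u : q (-8) ≤ (2*t)^8 / 40320 := by
    have := skk_le (t := t) ht' (-8)
    norm_num [Nat.factorial] at this
    exact this
  have hqm1u : q (-1) ≤ 2*t := by
    have := skk_le (t := t) ht' (-1)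
    norm_num [Nat.factorial] at this
    exact this
  have hq9u : q 9 ≤ (2*t)^9 / 362880 := by
    have := skk_le (t := t) ht' 9
    norm_num [Nat.factorial] at this
    exact this
  have hqm9u : q (-9) ≤ (2*t)^9 / 362880 := by
    have := skk_le (t := t) ht' (-9)
    norm_num [Nat.factorial] at this
    exact this
  have hq8l : Real.exp (-(4*t)) * (2*t)^8 / 40320 ≤ q 8 := by
    have := skk_ge (t := t) ht' 8
    norm_num [Nat.factorial] at this
    exact this
  have hq1l : Real.exp (-(4*t)) * (2*t) ≤ q 1 := by
    have := skk_ge (t := t) ht' 1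
    norm_num [Nat.factorial] at this
    exact this
  have hqm8l : Real.exp (-(4*t)) * (2*t)^8 / 40320 ≤ q (-8) := by
    have := skk_ge (t := t) ht' (-8)
    norm_num [Nat.factorial] at this
    exact this
  have hqm1l : Real.exp (-(4*t)) * (2*t) ≤ q (-1) := by
    have := skk_ge (t := t) ht' (-1)
    norm_num [Nat.factorial] at this
    exact this
  have hq9l : Real.exp (-(4*t)) * (2*t)^9 / 362880 ≤ q 9 := by
    have := skk_ge (t := t) ht' 9
    norm_num [Nat.factorial] at this
    exact this
  have hqm9l : Real.exp (-(4*t)) * (2*t)^9 / 362880 ≤ q (-9) := by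
    have := skk_ge (t := t) ht' (-9)
    norm_num [Nat.factorial] at this
    exact this
  have hexp0 : 0 < Real.exp (-(4*t)) := Real.exp_pos _
  have hexp1 : Real.exp (-(4*t)) ≤ 1 := Real.exp_le_one_iff.2 (by linarith)
  have hexpsq : Real.exp (-(4*t)) * Real.exp (-(4*t)) = Real.exp (-(8*t)) := by
    rw [← Real.exp_add]; ring_nf
  have hexplow : 1 - 8*t ≤ Real.exp (-(8*t)) := by
    have := Real.add_one_le_exp (-(8*t)); linarith
  have hmain_up : main ≤ (16/567) * t^9 := by
    have h1 : q 8 * q 1 ≤ ((2*t)^8 / 40320) * (2*t) :=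
      mul_le_mul hq8u hq1u (hq0 1) (by positivity)
    have h2 : q (-8) * q (-1) ≤ ((2*t)^8 / 40320) * (2*t) :=
      mul_le_mul hqm8u hqm1u (hq0 (-1)) (by positivity)
    have harith : ((2*t)^8 / 40320) * (2*t) * 2 + (2*t)^9/362880 * 2 = (16/567) * t^9 := by
      ring
    have := hq9u
    have := hqm9u
    linarith [hmain_def]
  have hmain_low : (16/567) * t^9 - t^10 ≤ main := by
    have h1 : (Real.exp (-(4*t)) * (2*t)^8 / 40320) * (Real.exp (-(4*t)) * (2*t)) ≤ q 8 * q 1 :=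
      mul_le_mul hq8l hq1l (by positivity) (hq0 8)
    have h2 : (Real.exp (-(4*t)) * (2*t)^8 / 40320) * (Real.exp (-(4*t)) * (2*t))
        ≤ q (-8) * q (-1) :=
      mul_le_mul hqm8l hqm1l (by positivity) (hq0 (-8))
    have h3 : (Real.exp (-(4*t)) * (2*t)^8 / 40320) * (Real.exp (-(4*t)) * (2*t))
        = Real.exp (-(8*t)) * ((2*t)^9 / 40320) := by
      rw [← hexpsq]; ring
    have h4 : Real.exp (-(8*t)) * ((2*t)^9 / 362880) ≤ Real.exp (-(4*t)) * (2*t)^9 / 362880 := by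
      rw [← hexpsq]
      have he : Real.exp (-(4*t)) * Real.exp (-(4*t)) ≤ Real.exp (-(4*t)) :=
        mul_le_of_le_one_right hexp0.le hexp1
      have := mul_le_mul_of_nonneg_right he (by positivity : (0:ℝ) ≤ (2*t)^9 / 362880)
      linarith [this]
    have h5 : Real.exp (-(8*t)) * ((2*t)^9/40320) * 2 + Real.exp (-(8*t)) * ((2*t)^9/362880) * 2
        = Real.exp (-(8*t)) * ((16/567) * t^9) := by
      ring
    have h6 : (1 - 8*t) * ((16/567) * t^9) ≤ Real.exp (-(8*t)) * ((16/567) * t^9) :=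
      mul_le_mul_of_nonneg_right hexplow (by positivity)
    have h7 : (1 - 8*t) * ((16/567) * t^9) = (16/567) * t^9 - (128/567) * t^10 := by ring
    have ht10 : (0:ℝ) ≤ t^10 := by positivity
    have h8 := hq9l
    have h9 := hqm9l
    linarith
  -- conclude
  rw [hS]
  have habs := abs_le.1 hkey2
  rw [abs_le]
  have ht10 : (0:ℝ) ≤ t^10 := by positivity
  constructor
  · linarith
  · linarith


end Stmt13

open MeasureTheory ProbabilityTheory Filter Asymptotics
open scoped NNReal ENNReal Topology

/-- Let `K ≥ 8`.  For `t > 0`, let `sk t k = P(W - W' = k)` denote the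
Skellam probability mass of the difference of two independent Poisson(`2t`) variables
(modelled by the product of two Poisson measures on `ℕ × ℕ`), and define
`B_K t = (1/2)[1 - Σ_{n=-64}^{64} Σ_{k=-K}^{K} sk t k · sk t (n - 8k)]`.
Then `B_K t = (8/567) t⁹ + o(t⁹)` as `t → 0⁺`. -/
theorem stmt13_BK_asymptotics
    (K : ℕ) (hK : 8 ≤ K)
    (sk : ℝ → ℤ → ℝ)
    (hsk : sk = fun t k =>
      (((poissonMeasure (2 * t).toNNReal).prod (poissonMeasure (2 * t).toNNReal))
        {p : ℕ × ℕ | (p.1 : ℤ) - (p.2 : ℤ) = k}).toReal)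
    (B : ℝ → ℝ)
    (hB : B = fun t => (1 / 2) * (1 - ∑ n ∈ Finset.Icc (-64 : ℤ) 64,
      ∑ k ∈ Finset.Icc (-(K : ℤ)) (K : ℤ), sk t k * sk t (n - 8 * k))) :
    (fun t : ℝ => B t - (8 / 567) * t ^ 9) =o[𝓝[>] (0 : ℝ)] (fun t : ℝ => t ^ 9) := by
  have hsk' : sk = Stmt13.skk := hsk
  rw [Asymptotics.isLittleO_iff]
  intro c hc
  have hδ : 0 < min (1/2 : ℝ) (c / 100000) := lt_min (by norm_num) (by positivity)
  filter_upwards [Ioo_mem_nhdsGT_of_mem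
    (show (0:ℝ) ∈ Set.Ico 0 (min (1/2 : ℝ) (c / 100000)) from ⟨le_refl 0, hδ⟩)] with t htt
  obtain ⟨ht0, htδ⟩ := htt
  have hx : 2 * t ≤ 1 := by
    have h := lt_of_lt_of_le htδ (min_le_left _ _)
    linarith
  have hkey := Stmt13.key K hK ht0 hx
  have hBt : B t = (1/2) * (1 - ∑ n ∈ Finset.Icc (-64:ℤ) 64,
      ∑ k ∈ Finset.Icc (-(K:ℤ)) (K:ℤ), Stmt13.skk t k * Stmt13.skk t (n - 8*k)) := by
    rw [hB, hsk']
  rw [hBt, Real.norm_eq_abs, Real.norm_eq_abs]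
  set Sv := ∑ n ∈ Finset.Icc (-64:ℤ) 64,
      ∑ k ∈ Finset.Icc (-(K:ℤ)) (K:ℤ), Stmt13.skk t k * Stmt13.skk t (n - 8*k) with hSv
  have h1 : |(1/2) * (1 - Sv) - (8/567) * t^9| = (1/2) * |(1 - Sv) - (16/567)*t^9| := by
    rw [show (1/2) * (1 - Sv) - (8/567) * t^9
        = (1/2) * ((1 - Sv) - (16/567)*t^9) from by ring, abs_mul]
    norm_num
  have ht9 : |t^9| = t^9 := abs_of_nonneg (by positivity)
  rw [h1, ht9]
  have h2 : 100000 * t ≤ c := by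
    have h := lt_of_lt_of_le htδ (min_le_right _ _)
    have := (lt_div_iff₀ (by norm_num : (0:ℝ) < 100000)).1 h
    linarith
  calc (1/2) * |(1 - Sv) - (16/567)*t^9| ≤ (1/2) * (200000 * t^10) := by linarith
    _ = (100000 * t) * t^9 := by ring
    _ ≤ c * t^9 := mul_le_mul_of_nonneg_right h2 (by positivity)
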